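/- Let P be a Łukasiewicz path, a and M a natural number and a finite multiset of natural numbers, and T = τ(P). Then P ∈ L_{a,M} if and only if the root of T has degree a+1 and the multiset of degrees of the non-root internal nodes of T equals M' = [1^{M_0}, 2^{M_1}, 3^{M_2}, ...], where M_k denotes the multiplicity of k in M (i.e., M' is the image of M under the map k ↦ k+1). -/

import Mathlib

/-! ## Plane trees -/

/-- A plane tree: a root together with an ordered (left-to-right) list of subtrees.
A node is a *leaf* if it has no children, and *internal* otherwise. -/
inductive PTree : Type where
  | node : List PTree → PTree


namespace Luka

/-! ## Łukasiewicz paths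

A path is encoded by its list of step increments: the step `(1,k)` (an up-step `U_k` of
degree `k`) is encoded by `k : ℤ` with `k ≥ 0`, and the down step `D = (1,-1)` by `-1`. -/

/-- `P` is a Łukasiewicz path: it is nonempty, uses steps `(1,k)` with `k ≥ -1`,
stays (weakly) above the `x`-axis before its last step, and ends at height `-1`
(so that it goes strictly below the axis only at the last step, which is forced
to be the down-step `D`). -/
def IsLukas (P : List ℤ) : Prop :=
  P ≠ [] ∧ (∀ s ∈ P, -1 ≤ s) ∧ (∀ n, n < P.length → 0 ≤ (P.take n).sum) ∧ P.sum = -1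

/-- The degrees of the up-steps of `P`, from left to right (the *profile* of `P`). -/
def upDegs (P : List ℤ) : List ℕ := (P.filter (fun s => 0 ≤ s)).map Int.toNat

/-- The profile multiset `𝔐(P)`: the multiset of degrees of the up-steps of `P`. -/
def profileM (P : List ℤ) : Multiset ℕ := (upDegs P : Multiset ℕ)

/-- The degree of the first up-step of `P`, if any. -/
def firstUp? (P : List ℤ) : Option ℕ := (upDegs P).head?

/-- The degree of the last up-step of `P`, if any. -/
def lastUp? (P : List ℤ) : Option ℕ := (upDegs P).getLast?

/-- Auxiliary: starting from height `h`, record the starting height of every up-step. -/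
def areaVecAux : ℤ → List ℤ → List ℤ
  | _, [] => []
  | h, s :: rest => (if 0 ≤ s then [h] else []) ++ areaVecAux (h + s) rest

/-- The area vector `Area(P)`: the `i`-th entry is the `y`-coordinate of the starting
point of the `i`-th up-step of `P`. -/
def areaVec (P : List ℤ) : List ℤ := areaVecAux 0 P

/-- `area(P)`: the sum of the entries of the area vector (entries of a Łukasiewicz
path are nonnegative, so taking `Int.toNat` entrywise is harmless). -/
def area (P : List ℤ) : ℕ := ((areaVec P).map Int.toNat).sum

/-- Auxiliary computation of the depth values: `cur` is the depth value of the previous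
step (`0` initially), and `stack` holds the pending depth values of the future matching
down-steps (top of the stack = value for the next matching down-step to come).
Reading an up-step `U_k` whose value is `cur` (inherited from the previous step) pushes
the values `cur+1, …, cur+k` for its `k` matching down-steps (its first matching
down-step, which crosses its topmost interior level, gets `cur+1`, etc.); reading a
down-step pops its value.  The list returned records the value `d_i` of each up-step,
from left to right. -/
def depthVecAux : ℕ → List ℕ → List ℤ → List ℕ
  | _, _, [] => []
  | cur, stack, s :: rest =>
    if 0 ≤ s then
      cur :: depthVecAux cur ((List.range s.toNat).map (fun i => cur + i + 1) ++ stack) rest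
    else
      match stack with
      | [] => depthVecAux cur [] rest
      | v :: st => depthVecAux v st rest

/-- The depth vector `Depth(P)`: the values `d_i` at the up-steps of `P`, left to right. -/
def depthVec (P : List ℤ) : List ℕ := depthVecAux 0 [] P

/-- `depth(P)`: the sum of the entries of the depth vector. -/
def depth (P : List ℤ) : ℕ := (depthVec P).sum

/-- `P ∈ 𝓛_M`. -/
def MemL (M : Multiset ℕ) (P : List ℤ) : Prop := IsLukas P ∧ profileM P = M

/-- `P ∈ 𝓛_{a,M}`: first up-step of degree `a`, profile multiset `M ⊎ {a}`. -/
def MemLa (a : ℕ) (M : Multiset ℕ) (P : List ℤ) : Prop :=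
  IsLukas P ∧ firstUp? P = some a ∧ profileM P = a ::ₘ M

/-- `P ∈ 𝓛_{M,b}`: last up-step of degree `b`, profile multiset `M ⊎ {b}`. -/
def MemLb (M : Multiset ℕ) (b : ℕ) (P : List ℤ) : Prop :=
  IsLukas P ∧ lastUp? P = some b ∧ profileM P = b ::ₘ M

/-- `P ∈ 𝓛_{a,M,b}`: first up-step of degree `a`, last up-step of degree `b`,
profile multiset `M ⊎ {a, b}`. -/
def MemLab (a : ℕ) (M : Multiset ℕ) (b : ℕ) (P : List ℤ) : Prop :=
  IsLukas P ∧ firstUp? P = some a ∧ lastUp? P = some b ∧ profileM P = a ::ₘ b ::ₘ M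

/-! ## Plane-tree statistics -/

/-- The (ordered) children of the root of a plane tree. -/
def children : PTree → List PTree
  | .node ts => ts

/-- The degree of (the root of) a plane tree: its number of children. -/
def numChildren (t : PTree) : ℕ := (children t).length

mutual
/-- Number of internal nodes of a plane tree. -/
def internCount : PTree → ℕ
  | .node [] => 0
  | .node (t :: ts) => 1 + internCountL (t :: ts)
def internCountL : List PTree → ℕ
  | [] => 0
  | t :: ts => internCount t + internCountL ts
end

mutual
/-- `lthornT T` = the sum of `lthorn(u)` over all internal nodes `u` of `T`, where
`lthorn(u)` is the number of descending edges of strict ancestors `v` of `u` lying to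
the left of the path from `v` to `u`.  (Every internal node of the subtree rooted at
the `i`-th child (0-indexed) of a node gains `i` left thorns from that node.) -/
def lthornT : PTree → ℕ
  | .node ts => lthornL 0 ts
def lthornL : ℕ → List PTree → ℕ
  | _, [] => 0
  | i, t :: ts => lthornT t + i * internCount t + lthornL (i + 1) ts
end

mutual
/-- `rthornT T` = the sum of `rthorn(u)` over all internal nodes `u` of `T`, where
`rthorn(u)` is the number of descending edges of strict ancestors `v` of `u` lying to
the right of the path from `v` to `u`. -/
def rthornT : PTree → ℕ
  | .node ts => rthornL ts
def rthornL : List PTree → ℕ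
  | [] => 0
  | t :: ts => rthornT t + ts.length * internCount t + rthornL ts
end

mutual
/-- The list of the values `lthorn(u)` for the internal nodes `u` of `T`, in
contour-walk (preorder) order. -/
def lthornList : PTree → List ℕ
  | .node [] => []
  | .node (t :: ts) => 0 :: lthornLL 0 (t :: ts)
def lthornLL : ℕ → List PTree → List ℕ
  | _, [] => []
  | i, t :: ts => (lthornList t).map (· + i) ++ lthornLL (i + 1) ts
end

mutual
/-- The list of the values `rthorn(u)` for the internal nodes `u` of `T`, in
contour-walk (preorder) order. -/
def rthornList : PTree → List ℕ
  | .node [] => []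
  | .node (t :: ts) => 0 :: rthornLL (t :: ts)
def rthornLL : List PTree → List ℕ
  | [] => []
  | t :: ts => (rthornList t).map (· + ts.length) ++ rthornLL ts
end

/-! ## The bijections `λ` and `τ` -/

mutual
/-- `λ`: record each node of the tree at its first visit in the left-to-right contour
walk: `U_k` (i.e. `k`) for an internal node with `k+1` children, `D` (i.e. `-1`)
for a leaf. -/
def lambdaT : PTree → List ℤ
  | .node ts => ((ts.length : ℤ) - 1) :: lambdaL ts
def lambdaL : List PTree → List ℤ
  | [] => []
  | t :: ts => lambdaT t ++ lambdaL ts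
end

/-- Auxiliary for `τ`: reading the path from right to left, maintain the stack of the
already-built subtrees (in left-to-right order); a down-step `D` creates a leaf and an
up-step `U_k` grabs the `k+1` topmost subtrees as its children.  This builds the same
tree as the left-to-right "leftmost bud" construction. -/
def tauStack (P : List ℤ) : List PTree :=
  P.foldr (fun s st =>
    if s < 0 then PTree.node [] :: st
    else PTree.node (st.take (s.toNat + 1)) :: st.drop (s.toNat + 1)) []

/-- `τ`: the plane tree associated with a Łukasiewicz path. -/
def tau (P : List ℤ) : PTree := (tauStack P).headD (.node [])

mutual
/-- The mirror of a plane tree: reverse the left-to-right order of the children of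
every internal node. -/
def mir : PTree → PTree
  | .node ts => .node (mirL ts).reverse
def mirL : List PTree → List PTree
  | [] => []
  | t :: ts => mir t :: mirL ts
end

mutual
/-- The subtrees rooted at the internal nodes of `T`, in contour-walk (preorder)
order. -/
def internalSubtrees : PTree → List PTree
  | .node [] => []
  | .node (t :: ts) => .node (t :: ts) :: internalSubtreesL (t :: ts)
def internalSubtreesL : List PTree → List PTree
  | [] => []
  | t :: ts => internalSubtrees t ++ internalSubtreesL ts
end

/-- The multiset of degrees of the non-root internal nodes of `T`. -/
def nonRootInternalDegs (T : PTree) : Multiset ℕ :=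
  (((internalSubtreesL (children T)).map numChildren : List ℕ) : Multiset ℕ)

/-! ## Lodestars and the lodestar swap -/

/-- A node is a lodestar-type node if it is internal and all its children are leaves. -/
def isLodestarNode (t : PTree) : Bool :=
  !(children t).isEmpty && (children t).all (fun c => (children c).isEmpty)

mutual
/-- The subtree rooted at the *left lodestar* of `T`: the first internal node, in
contour-walk (preorder) order, all of whose children are leaves (if it exists). -/
def leftLode? : PTree → Option PTree
  | .node ts =>
    if isLodestarNode (.node ts) then some (.node ts) else leftLodeL? ts
def leftLodeL? : List PTree → Option PTree
  | [] => none
  | t :: ts =>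
    match leftLode? t with
    | some r => some r
    | none => leftLodeL? ts
end

mutual
/-- The subtree rooted at the *right lodestar* of `T`: the last internal node, in
contour-walk (preorder) order, all of whose children are leaves (if it exists). -/
def rightLode? : PTree → Option PTree
  | .node ts =>
    match rightLodeL? ts with
    | some r => some r
    | none => if isLodestarNode (.node ts) then some (.node ts) else none
def rightLodeL? : List PTree → Option PTree
  | [] => none
  | t :: ts =>
    match rightLodeL? ts with
    | some r => some r
    | none => rightLode? t
end

mutual
/-- Replace the left lodestar of `T` (first preorder all-leaf-children internal node)
by the tree `r`; `none` if `T` has no internal node. -/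
def replF : PTree → PTree → Option PTree
  | r, .node ts =>
    if isLodestarNode (.node ts) then some r
    else (replFL r ts).map PTree.node
def replFL : PTree → List PTree → Option (List PTree)
  | _, [] => none
  | r, t :: ts =>
    match replF r t with
    | some t' => some (t' :: ts)
    | none => (replFL r ts).map (t :: ·)
end

mutual
/-- Replace the right lodestar of `T` (last preorder all-leaf-children internal node)
by the tree `r`; `none` if `T` has no internal node. -/
def replL : PTree → PTree → Option PTree
  | r, .node ts =>
    match replLL r ts with
    | some ts' => some (.node ts')
    | none => if isLodestarNode (.node ts) then some r else none
def replLL : PTree → List PTree → Option (List PTree)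
  | _, [] => none
  | r, t :: ts =>
    match replLL r ts with
    | some ts' => some (t :: ts')
    | none => (replL r t).map (· :: ts)
end

/-- The lodestar swap: exchange the subtrees rooted at the left lodestar and the
right lodestar of `T` (each a node together with its pendant leaves). -/
def lodeSwap (T : PTree) : PTree :=
  match leftLode? T, rightLode? T with
  | some L, some R => ((replF R T).bind (replL L)).getD T
  | _, _ => T

end Luka

namespace Luka

theorem upDegs_cons (s : ℤ) (rest : List ℤ) :
    upDegs (s :: rest) = if 0 ≤ s then s.toNat :: upDegs rest else upDegs rest := by
  by_cases h : 0 ≤ s <;> simp [upDegs, List.filter_cons, h]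

theorem upDegs_append (a b : List ℤ) : upDegs (a ++ b) = upDegs a ++ upDegs b := by
  simp [upDegs]

theorem lambdaL_append (a b : List PTree) : lambdaL (a ++ b) = lambdaL a ++ lambdaL b := by
  induction a with
  | nil => rfl
  | cons t ts ih => simp [lambdaL, ih]

mutual
theorem upDegs_lambdaT (T : PTree) :
    upDegs (lambdaT T) = (internalSubtrees T).map (fun t => numChildren t - 1) := by
  match T with
  | .node [] => simp [lambdaT, lambdaL, internalSubtrees, upDegs_cons, upDegs]
  | .node (t :: ts) =>
    rw [lambdaT, upDegs_cons, if_pos (by simp), internalSubtrees, List.map_cons,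
      upDegs_lambdaL (t :: ts)]
    congr 1
    simp [numChildren, children]
termination_by sizeOf T
theorem upDegs_lambdaL (ts : List PTree) :
    upDegs (lambdaL ts) = (internalSubtreesL ts).map (fun t => numChildren t - 1) := by
  match ts with
  | [] => rfl
  | t :: ts =>
    rw [lambdaL, upDegs_append, internalSubtreesL, List.map_append,
      upDegs_lambdaT t, upDegs_lambdaL ts]
termination_by sizeOf ts
end

mutual
theorem one_le_deg_internalSubtrees (T : PTree) :
    ∀ t ∈ internalSubtrees T, 1 ≤ numChildren t := by
  match T with
  | .node [] => intro t ht; simp [internalSubtrees] at ht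
  | .node (s :: ss) =>
    intro t ht
    rw [internalSubtrees] at ht
    rcases List.mem_cons.mp ht with h | h
    · subst h; simp [numChildren, children]
    · exact one_le_deg_internalSubtreesL (s :: ss) t h
termination_by sizeOf T
theorem one_le_deg_internalSubtreesL (ts : List PTree) :
    ∀ t ∈ internalSubtreesL ts, 1 ≤ numChildren t := by
  match ts with
  | [] => intro t ht; simp [internalSubtreesL] at ht
  | s :: ss =>
    intro t ht
    rw [internalSubtreesL] at ht
    rcases List.mem_append.mp ht with h | h
    · exact one_le_deg_internalSubtrees s t h
    · exact one_le_deg_internalSubtreesL ss t h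
termination_by sizeOf ts
end

theorem tauStack_cons (s : ℤ) (rest : List ℤ) :
    tauStack (s :: rest) = if s < 0 then PTree.node [] :: tauStack rest
      else PTree.node ((tauStack rest).take (s.toNat + 1)) ::
        (tauStack rest).drop (s.toNat + 1) := rfl

theorem tauStack_spec (P : List ℤ) (hsteps : ∀ s ∈ P, -1 ≤ s)
    (hsuf : ∀ n, n < P.length → (P.drop n).sum ≤ -1) :
    ((tauStack P).length : ℤ) = -P.sum ∧ lambdaL (tauStack P) = P := by
  induction P with
  | nil => simp [tauStack]; rfl
  | cons s rest ih =>
    obtain ⟨hlen, hlam⟩ := ih (fun x hx => hsteps x (List.mem_cons_of_mem _ hx))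
      (fun n hn => by
        have h := hsuf (n + 1) (by simpa using Nat.succ_lt_succ hn)
        simpa using h)
    have hsum : s + rest.sum ≤ -1 := by simpa using hsuf 0 (by simp)
    rw [tauStack_cons]
    by_cases hneg : s < 0
    · have hs1 : s = -1 := le_antisymm (by omega) (hsteps s List.mem_cons_self)
      rw [if_pos hneg]
      refine ⟨?_, ?_⟩
      · simp only [List.length_cons, List.sum_cons]
        push_cast
        omega
      · show lambdaT (.node []) ++ lambdaL (tauStack rest) = s :: rest
        simp [lambdaT, lambdaL, hlam, hs1]
    · push_neg at hneg
      rw [if_neg (not_lt.mpr hneg)]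
      have hge : s.toNat + 1 ≤ (tauStack rest).length := by omega
      refine ⟨?_, ?_⟩
      · simp only [List.length_cons, List.length_drop, List.sum_cons]
        push_cast
        omega
      · show lambdaT (.node _) ++ lambdaL ((tauStack rest).drop (s.toNat + 1)) = s :: rest
        rw [lambdaT, List.cons_append, ← lambdaL_append, List.take_append_drop, hlam,
          List.length_take]
        congr 2
        rw [Nat.min_eq_left hge]
        push_cast
        omega

theorem lambdaT_tau {P : List ℤ} (hP : IsLukas P) : lambdaT (tau P) = P := by
  obtain ⟨hne, hsteps, hpre, hsum⟩ := hP
  have hsuf : ∀ n, n < P.length → (P.drop n).sum ≤ -1 := by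
    intro n hn
    have h1 := hpre n hn
    have h2 : (P.take n).sum + (P.drop n).sum = P.sum := by
      rw [← List.sum_append, List.take_append_drop]
    omega
  obtain ⟨hlen, hlam⟩ := tauStack_spec P hsteps hsuf
  rw [hsum] at hlen
  have hlen1 : (tauStack P).length = 1 := by omega
  obtain ⟨T, hT⟩ := List.length_eq_one_iff.mp hlen1
  rw [hT] at hlam
  have : lambdaT T = P := by simpa [lambdaL] using hlam
  rw [tau, hT]
  simpa using this

end Luka

open Luka in
/-- Let `P` be a Łukasiewicz path and `T = τ(P)`.  Then `P ∈ 𝓛_{a,M}` if and only if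
the root of `T` has degree `a + 1` and the multiset of degrees of the non-root internal
nodes of `T` is the image of `M` under `k ↦ k + 1`
(that is, `M' = [1^{M_0}, 2^{M_1}, 3^{M_2}, …]`). -/
theorem memLa_iff_tree_characterization (P : List ℤ) (a : ℕ) (M : Multiset ℕ)
    (hP : IsLukas P) :
    MemLa a M P ↔
      numChildren (tau P) = a + 1 ∧
      nonRootInternalDegs (tau P) = M.map (fun k => k + 1) := by
  have hlam := lambdaT_tau hP
  obtain ⟨ts, hts⟩ : ∃ ts, tau P = .node ts := ⟨children (tau P), by cases h : tau P; simp [children]⟩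
  have hup : upDegs P = (internalSubtrees (tau P)).map (fun t => numChildren t - 1) := by
    conv_lhs => rw [← hlam]
    exact upDegs_lambdaT _
  rw [hts] at hup ⊢
  match ts with
  | [] =>
    constructor
    · rintro ⟨-, hfu, -⟩
      rw [firstUp?, hup] at hfu
      simp [internalSubtrees] at hfu
    · rintro ⟨hnc, -⟩
      simp [numChildren, children] at hnc
  | t :: ts =>
    rw [internalSubtrees, List.map_cons] at hup
    set L := internalSubtreesL (t :: ts) with hL
    have hnc : numChildren (PTree.node (t :: ts)) = ts.length + 1 := by
      simp [numChildren, children]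
    have hfu : firstUp? P = some ts.length := by
      rw [firstUp?, hup, hnc]
      simp
    have hprof : profileM P = ts.length ::ₘ ((L.map numChildren : Multiset ℕ).map (fun x => x - 1)) := by
      rw [profileM, hup, hnc]
      simp only [Multiset.map_coe, List.map_map]
      rfl
    have hnr : nonRootInternalDegs (PTree.node (t :: ts)) = (L.map numChildren : Multiset ℕ) := by
      rw [nonRootInternalDegs]
      simp [children, hL]
    have hone : ∀ x ∈ (L.map numChildren : Multiset ℕ), 1 ≤ x := by
      intro x hx
      rw [Multiset.mem_coe, List.mem_map] at hx
      obtain ⟨u, hu, rfl⟩ := hx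
      exact one_le_deg_internalSubtreesL _ u hu
    set N : Multiset ℕ := (L.map numChildren : Multiset ℕ) with hNdef
    constructor
    · rintro ⟨-, hfa, hpa⟩
      rw [hfu] at hfa
      have hta : ts.length = a := by injection hfa
      rw [hprof, hta] at hpa
      have hM : N.map (fun x => x - 1) = M := (Multiset.cons_inj_right a).mp hpa
      refine ⟨by rw [hnc, hta], ?_⟩
      rw [hnr, ← hM, Multiset.map_map]
      symm
      calc N.map ((fun k => k + 1) ∘ fun x => x - 1)
          = N.map id := Multiset.map_congr rfl (fun x hx => by
            have := hone x hx; simp [Function.comp]; omega)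
        _ = N := Multiset.map_id N
    · rintro ⟨hnca, hnra⟩
      rw [hnc] at hnca
      have hta : ts.length = a := by omega
      rw [hnr] at hnra
      refine ⟨hP, by rw [hfu, hta], ?_⟩
      rw [hprof, hta, hnra, Multiset.map_map]
      congr 1
      calc M.map ((fun x => x - 1) ∘ fun k => k + 1)
          = M.map id := Multiset.map_congr rfl (fun x hx => by simp)
        _ = M := Multiset.map_id M
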